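/- Let k be an algebraically closed field of characteristic 3. The 4×4 matrix M with rows (0, a₁, a₂, a₂), (0,0,0,0), (0,0,1,1), (0,0,-1,-1) over k satisfies M² = 0 and, when a₁ ≠ 0, has rank 2. -/
import Mathlib
set_option maxHeartbeats 800000


/-- Over an algebraically closed field `k` of characteristic `3`, the
4×4 matrix with rows `(0, a₁, a₂, a₂)`, `(0,0,0,0)`, `(0,0,1,1)`, `(0,0,-1,-1)`
squares to zero, and has rank 2 when `a₁ ≠ 0`. -/
theorem stmt_0 (k : Type) [Field k] [IsAlgClosed k] [CharP k 3] (a₁ a₂ : k)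
    (M : Matrix (Fin 4) (Fin 4) k)
    (hM : M = !![0, a₁, a₂, a₂; 0, 0, 0, 0; 0, 0, 1, 1; 0, 0, -1, -1]) :
    M * M = 0 ∧ (a₁ ≠ 0 → M.rank = 2) := by
  have hsq : M * M = 0 := by
    subst hM
    ext i j
    fin_cases i <;> fin_cases j <;>
      simp [Matrix.mul_apply, Fin.sum_univ_four, Matrix.vecHead, Matrix.vecTail] <;> ring
  refine ⟨hsq, fun ha => ?_⟩
  -- upper bound
  have hle : M.rank ≤ 2 := by
    have := Matrix.rank_add_rank_le_card_of_mul_eq_zero hsq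
    simp only [Fintype.card_fin] at this
    omega
  -- lower bound via rows 0 and 2
  have hge : 2 ≤ M.rank := by
    have hli : LinearIndependent k ![M 0, M 2] := by
      rw [linearIndependent_fin2]
      constructor
      · intro h
        have := congrFun h 2
        rw [hM] at this
        simp at this
      · intro a h
        have := congrFun h 1
        rw [hM] at this
        simp [Matrix.vecHead, Matrix.vecTail] at this
        exact ha this.symm
    have hspan : Submodule.span k (Set.range ![M 0, M 2]) ≤
        Submodule.span k (Set.range M) := by
      apply Submodule.span_mono
      rintro x ⟨i, rfl⟩
      fin_cases i
      · exact ⟨0, rfl⟩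
      · exact ⟨2, rfl⟩
    have h2 : Module.finrank k (Submodule.span k (Set.range ![M 0, M 2])) = 2 := by
      rw [finrank_span_eq_card hli]
      simp
    rw [Matrix.rank_eq_finrank_span_row, ← h2]
    exact Submodule.finrank_mono hspan
  omega
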